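/- arXiv:1809.06806 — 2 statements merged into one kernel-verified Lean document; each statement's English description precedes it below -/
import Mathlib

section
/- Let A be an (N-1)×(N-1) real matrix with A_{ii} = λ(i), A_{ij} = ν(j,i) ≥ 0 for (j,i) ∈ E, and 0 otherwise, where the root vertex 1 has no incoming edges. Suppose that for all 2 ≤ i ≤ N-1, λ(i) + Σ_{k : (k,i) ∈ E} ν(k,i) < λ(1). Then λ(1) is an eigenvalue of A (with left eigenvector e_1^T), and every other eigenvalue of A has real part strictly less than λ(1); in particular λ(1) is a simple eigenvalue. -/
open Polynomial Matrix Finset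

lemma aux_charpoly_eval {m : ℕ} (M : Matrix (Fin m) (Fin m) ℂ) (μ : ℂ) :
    M.charpoly.eval μ = (μ • (1 : Matrix (Fin m) (Fin m) ℂ) - M).det := by
  rw [Matrix.charpoly, ← Polynomial.coe_evalRingHom, RingHom.map_det]
  congr 1
  ext i j
  by_cases h : i = j <;>
    simp [h, Matrix.charmatrix_apply, Matrix.one_apply, Matrix.diagonal_apply]

lemma aux_mem_spectrum_iff {m : ℕ} (M : Matrix (Fin m) (Fin m) ℂ) (μ : ℂ) :
    μ ∈ spectrum ℂ M ↔ M.charpoly.IsRoot μ := by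
  rw [spectrum.mem_iff, Matrix.isUnit_iff_isUnit_det, isUnit_iff_ne_zero, not_ne_iff,
    Polynomial.IsRoot, aux_charpoly_eval, Algebra.algebraMap_eq_smul_one]

lemma aux_gersh {m : ℕ} (M : Matrix (Fin m) (Fin m) ℂ) {μ : ℂ} (h : μ ∈ spectrum ℂ M) :
    ∃ k, ‖μ - M k k‖ ≤ ∑ j ∈ Finset.univ.erase k, ‖M k j‖ := by
  have hEq : Matrix.toLinAlgEquiv' M = Matrix.toLin' M := by
    apply LinearMap.ext; intro v; rfl
  have h' : μ ∈ spectrum ℂ (Matrix.toLinAlgEquiv' M) := by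
    rwa [AlgEquiv.spectrum_eq Matrix.toLinAlgEquiv' M]
  rw [hEq, ← Module.End.hasEigenvalue_iff_mem_spectrum] at h'
  obtain ⟨k, hk⟩ := eigenvalue_mem_ball h'
  exact ⟨k, by rwa [Metric.mem_closedBall, dist_eq_norm] at hk⟩

/-- Let `A` be the mean-growth matrix of the process on a graph whose root
(vertex `0`) has no incoming edges, with `A_{ii} = lam i`, `A_{ij} = ν j i ≥ 0` for edges
`(j,i)`, and `0` otherwise. If `lam i + Σ_{k : (k,i) ∈ E} ν k i < lam 0` for all `i ≠ 0`,
then `lam 0` is an eigenvalue of `A` with left eigenvector `e₀ᵀ`, every other (complex)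
eigenvalue has real part strictly less than `lam 0`, and `lam 0` is a simple eigenvalue. -/
theorem stmt13 (n : ℕ) (hn : 0 < n) (E : Fin n → Fin n → Prop) [DecidableRel E]
    (lam : Fin n → ℝ) (ν : Fin n → Fin n → ℝ)
    (hν : ∀ i j, E i j → 0 ≤ ν i j)
    (hroot : ∀ k, ¬ E k ⟨0, hn⟩)
    (hrow : ∀ i : Fin n, i ≠ ⟨0, hn⟩ →
      lam i + ∑ k, (if E k i then ν k i else 0) < lam ⟨0, hn⟩) :
    let A : Matrix (Fin n) (Fin n) ℝ :=
      fun i j => if i = j then lam i else if E j i then ν j i else 0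
    let B : Matrix (Fin n) (Fin n) ℂ := A.map Complex.ofReal
    (Matrix.vecMul (Pi.single ⟨0, hn⟩ 1 : Fin n → ℝ) A
      = lam ⟨0, hn⟩ • (Pi.single ⟨0, hn⟩ 1 : Fin n → ℝ)) ∧
    ((lam ⟨0, hn⟩ : ℂ) ∈ spectrum ℂ B) ∧
    (∀ μ ∈ spectrum ℂ B, μ ≠ (lam ⟨0, hn⟩ : ℂ) → μ.re < lam ⟨0, hn⟩) ∧
    Polynomial.rootMultiplicity ((lam ⟨0, hn⟩ : ℂ)) B.charpoly = 1 := by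
  obtain ⟨m, rfl⟩ : ∃ m, n = m + 1 := ⟨n - 1, by omega⟩
  intro A B
  have h0 : (⟨0, hn⟩ : Fin (m + 1)) = 0 := rfl
  rw [h0] at hroot hrow ⊢
  -- basic entries
  have hA0 : ∀ j, A 0 j = if (0 : Fin (m + 1)) = j then lam 0 else 0 := by
    intro j
    by_cases h : (0 : Fin (m + 1)) = j
    · simp [A, h]
    · simp [A, h, hroot j]
  -- claim 1
  have claim1 : Matrix.vecMul (Pi.single 0 1 : Fin (m + 1) → ℝ) A
      = lam 0 • (Pi.single 0 1 : Fin (m + 1) → ℝ) := by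
    funext j
    have : Matrix.vecMul (Pi.single 0 1 : Fin (m + 1) → ℝ) A j = A 0 j := by
      simp [Matrix.vecMul, dotProduct, Pi.single_apply, ite_mul]
    rw [this, hA0 j]
    by_cases h : (0 : Fin (m + 1)) = j <;> simp [h, Pi.single_apply, eq_comm]
  -- the submatrix
  set B' : Matrix (Fin m) (Fin m) ℂ := B.submatrix Fin.succ Fin.succ with hB'
  -- charpoly factorization
  have hsubchar : (charmatrix B).submatrix Fin.succ Fin.succ = charmatrix B' := by
    ext i j
    by_cases h : i = j
    · simp [h, Matrix.charmatrix_apply_eq, B']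
    · have h' : Fin.succ i ≠ Fin.succ j := fun hc => h (Fin.succ_inj.mp hc)
      simp [Matrix.charmatrix_apply_ne _ _ _ h, Matrix.charmatrix_apply_ne _ _ _ h', B']
  have hfac : B.charpoly = (X - C (lam 0 : ℂ)) * B'.charpoly := by
    rw [Matrix.charpoly, Matrix.det_succ_row_zero, Finset.sum_eq_single 0]
    · have hB00 : B 0 0 = ((lam 0 : ℝ) : ℂ) := by
        show Complex.ofReal (A 0 0) = _
        rw [hA0 0]
        simp
      have hd : charmatrix B 0 0 = X - C (lam 0 : ℂ) := by
        rw [Matrix.charmatrix_apply_eq, hB00]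
      rw [Fin.succAbove_zero, hsubchar, hd, Matrix.charpoly]
      simp
    · intro j _ hj
      have hB0j : B 0 j = 0 := by
        simp [B, hA0 j, (Ne.symm hj : ¬ (0 : Fin (m+1)) = j)]
      rw [Matrix.charmatrix_apply_ne _ _ _ (Ne.symm hj), hB0j]
      simp
    · intro h; exact absurd (Finset.mem_univ _) h
  -- Gershgorin bound for the submatrix spectrum
  have hspec' : ∀ μ ∈ spectrum ℂ B', μ.re < lam 0 := by
    intro μ hμ
    obtain ⟨k, hk⟩ := aux_gersh B' hμ
    set i : Fin (m + 1) := Fin.succ k with hi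
    have hi0 : i ≠ 0 := Fin.succ_ne_zero k
    have hdiag : B' k k = ((lam i : ℝ) : ℂ) := by
      show Complex.ofReal (A (Fin.succ k) (Fin.succ k)) = _
      simp [A, i]
    have hre : μ.re - lam i ≤ ‖μ - B' k k‖ := by
      rw [hdiag]
      have := Complex.re_le_norm (μ - ((lam i : ℝ) : ℂ))
      simpa [Complex.sub_re] using this
    have hsum : ∑ j ∈ Finset.univ.erase k, ‖B' k j‖
        ≤ ∑ k', (if E k' i then ν k' i else 0) := by
      have heq : ∀ j ∈ Finset.univ.erase k,
          ‖B' k j‖ = (if E (Fin.succ j) i then ν (Fin.succ j) i else 0) := by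
        intro j hj
        have hjk : Fin.succ j ≠ i := fun hc => (Finset.mem_erase.mp hj).1 (Fin.succ_inj.mp hc)
        have : B' k j = (((if E (Fin.succ j) i then ν (Fin.succ j) i else 0) : ℝ) : ℂ) := by
          show Complex.ofReal (A (Fin.succ k) (Fin.succ j)) = _
          simp only [A]
          rw [if_neg (show ¬ Fin.succ k = Fin.succ j from fun hc => hjk hc.symm)]
        rw [this, Complex.norm_real]
        by_cases hE : E (Fin.succ j) i
        · simp [hE, abs_of_nonneg (hν _ _ hE)]
        · simp [hE]
      rw [Finset.sum_congr rfl heq]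
      have himg : ∑ j ∈ Finset.univ.erase k,
          (if E (Fin.succ j) i then ν (Fin.succ j) i else 0)
          = ∑ k' ∈ (Finset.univ.erase k).image Fin.succ,
            (if E k' i then ν k' i else 0) := by
        rw [Finset.sum_image (fun a _ b _ h => Fin.succ_inj.mp h)]
      rw [himg]
      apply Finset.sum_le_sum_of_subset_of_nonneg (Finset.subset_univ _)
      intro k' _ _
      by_cases hE : E k' i
      · simp [hE, hν _ _ hE]
      · simp [hE]
    have := hrow i hi0
    have : μ.re ≤ lam i + ∑ k', (if E k' i then ν k' i else 0) := by
      have h1 : μ.re - lam i ≤ ∑ k', (if E k' i then ν k' i else 0) :=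
        le_trans hre (le_trans hk hsum)
      linarith
    linarith [hrow i hi0]
  -- lam 0 is not a root of B'.charpoly
  have hq0 : ¬ B'.charpoly.IsRoot ((lam 0 : ℝ) : ℂ) := by
    intro h
    have := hspec' _ ((aux_mem_spectrum_iff B' _).mpr h)
    simp at this
  refine ⟨claim1, ?_, ?_, ?_⟩
  · rw [aux_mem_spectrum_iff, hfac]
    simp [Polynomial.IsRoot]
  · intro μ hμ hne
    have hr := (aux_mem_spectrum_iff B μ).mp hμ
    rw [hfac] at hr
    have : B'.charpoly.IsRoot μ := by
      have := hr
      simp only [Polynomial.IsRoot, Polynomial.eval_mul, Polynomial.eval_sub,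
        Polynomial.eval_X, Polynomial.eval_C] at this ⊢
      rcases mul_eq_zero.mp this with h | h
      · exact absurd (sub_eq_zero.mp h) hne
      · exact h
    exact hspec' μ ((aux_mem_spectrum_iff B' μ).mpr this)
  · have hne0 : (X - C ((lam 0 : ℝ) : ℂ)) * B'.charpoly ≠ 0 :=
      mul_ne_zero (Polynomial.X_sub_C_ne_zero _) (B'.charpoly_monic.ne_zero)
    rw [hfac, Polynomial.rootMultiplicity_mul hne0,
      Polynomial.rootMultiplicity_X_sub_C_self, Polynomial.rootMultiplicity_eq_zero hq0]
end

section
/- Let p be a root-to-target path in a directed graph G and ω a root-to-target walk with q[ω] = p and ω ≠ p, where q reduces a walk to its underlying path by deleting cycles. Then the walk weight factorizes as w(ω) = w(p) · w̃(ω), where w̃(ω) is the product of transition rates over the edges of ω lying in its cycles divided by the product of fitness costs λ - λ(v) over the internal vertices of those cycles; consequently w(p)/(w(p) + w(ω)) = 1/(1 + w̃(ω)) → 1 as all transition rates tend to 0 (with the fitness costs fixed and positive). -/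
open Filter

/-- The multiset of (directed) edges traversed by a walk, given as its list of vertices. -/
def walkEdges {V : Type*} (l : List V) : Multiset (V × V) := ↑(l.zip l.tail)

/-- The multiset of internal vertices of a walk (all vertices except the first and last). -/
def walkInternals {V : Type*} (l : List V) : Multiset V := ↑(l.tail.dropLast)

/-- The weight of a walk: the product of the transition rates `ν` along its edges divided by
the product of the fitness costs `L - lam v` over its internal vertices, `L` being the root
growth rate. -/
noncomputable def walkWeight {V : Type*} (L : ℝ) (lam : V → ℝ) (ν : V → V → ℝ) (l : List V) : ℝ :=
  ((walkEdges l).map fun e => ν e.1 e.2).prod /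
    ((walkInternals l).map fun v => L - lam v).prod

lemma prod_map_smul {α : Type*} (ε : ℝ) (f : α → ℝ) (s : Multiset α) :
    (s.map fun e => ε * f e).prod = ε ^ Multiset.card s * (s.map f).prod := by
  induction s using Multiset.induction with
  | empty => simp
  | cons a s ih => simp [ih]; ring

lemma card_walkEdges {V : Type*} (l : List V) :
    Multiset.card (walkEdges l) = l.length - 1 := by
  simp [walkEdges, List.length_zip]

/-- Let `p` be a root-to-target path and `ω ≠ p` a root-to-target walk reducing
to `p` by deleting cycles (so the edges and internal vertices of `p` are among those of `ω`,
and `ω` is strictly longer).  Then the walk weight factorizes as `w(ω) = w(p) · w̃(ω)` where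
`w̃(ω)` is the product of the transition rates over the cycle edges divided by the fitness
costs over the cycle's internal vertices; consequently, scaling all transition rates by
`ε → 0⁺` (fitness costs fixed and positive), `w(p)/(w(p) + w(ω)) → 1`. -/
theorem stmt18 {V : Type*} [DecidableEq V] (L : ℝ) (lam : V → ℝ) (ν : V → V → ℝ)
    (p ω : List V)
    (hp2 : 2 ≤ p.length)
    (hedges : walkEdges p ≤ walkEdges ω)
    (hints : walkInternals p ≤ walkInternals ω)
    (hlen : p.length < ω.length)
    (hcost : ∀ v ∈ walkInternals ω, 0 < L - lam v)
    (hrate : ∀ e ∈ walkEdges ω, 0 < ν e.1 e.2) :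
    walkWeight L lam ν ω = walkWeight L lam ν p *
      (((walkEdges ω - walkEdges p).map fun e => ν e.1 e.2).prod /
        ((walkInternals ω - walkInternals p).map fun v => L - lam v).prod) ∧
    Tendsto (fun ε : ℝ =>
        walkWeight L lam (fun a b => ε * ν a b) p /
          (walkWeight L lam (fun a b => ε * ν a b) p +
            walkWeight L lam (fun a b => ε * ν a b) ω))
      (nhdsWithin 0 (Set.Ioi 0)) (nhds 1) := by
  have hE := tsub_add_cancel_of_le hedges
  have hI := tsub_add_cancel_of_le hints
  have hfact : walkWeight L lam ν ω = walkWeight L lam ν p *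
      (((walkEdges ω - walkEdges p).map fun e => ν e.1 e.2).prod /
        ((walkInternals ω - walkInternals p).map fun v => L - lam v).prod) := by
    unfold walkWeight
    conv_lhs => rw [← hE, ← hI]
    rw [ Multiset.map_add, Multiset.map_add, Multiset.prod_add, Multiset.prod_add,
      mul_div_mul_comm, mul_comm]
  refine ⟨hfact, ?_⟩
  -- positivity
  have hP : 0 < walkWeight L lam ν p := by
    apply div_pos
    · apply Multiset.prod_pos
      intro x hx
      obtain ⟨e, he, rfl⟩ := Multiset.mem_map.mp hx
      exact hrate e (Multiset.mem_of_le hedges he)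
    · apply Multiset.prod_pos
      intro x hx
      obtain ⟨v, hv, rfl⟩ := Multiset.mem_map.mp hx
      exact hcost v (Multiset.mem_of_le hints hv)
  have hW : 0 < walkWeight L lam ν ω := by
    apply div_pos
    · apply Multiset.prod_pos
      intro x hx
      obtain ⟨e, he, rfl⟩ := Multiset.mem_map.mp hx
      exact hrate e he
    · apply Multiset.prod_pos
      intro x hx
      obtain ⟨v, hv, rfl⟩ := Multiset.mem_map.mp hx
      exact hcost v hv
  set P := walkWeight L lam ν p with hPdef
  set W := walkWeight L lam ν ω with hWdef
  set m := Multiset.card (walkEdges p) with hm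
  set n := Multiset.card (walkEdges ω) with hn
  have hmn : m < n := by
    rw [hm, hn, card_walkEdges, card_walkEdges]; omega
  have hscale : ∀ (ε : ℝ) (l : List V),
      walkWeight L lam (fun a b => ε * ν a b) l
        = ε ^ Multiset.card (walkEdges l) * walkWeight L lam ν l := by
    intro ε l
    unfold walkWeight
    beta_reduce
    rw [prod_map_smul ε (fun e : V × V => ν e.1 e.2), mul_div_assoc]
  have hk : n - m ≠ 0 := by omega
  have htend : Tendsto (fun ε : ℝ => P / (P + ε ^ (n - m) * W))
      (nhdsWithin 0 (Set.Ioi 0)) (nhds 1) := by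
    have h1 : Tendsto (fun ε : ℝ => P + ε ^ (n - m) * W) (nhds 0) (nhds P) := by
      have h2 := ((continuous_pow (n - m)).tendsto (0 : ℝ)).mul_const W
      simpa [zero_pow hk] using tendsto_const_nhds.add h2
    have := (tendsto_const_nhds (x := P)).div h1 hP.ne'
    rw [div_self hP.ne'] at this
    exact this.mono_left nhdsWithin_le_nhds
  refine Tendsto.congr' ?_ htend
  filter_upwards [self_mem_nhdsWithin] with ε (hε : 0 < ε)
  rw [hscale, hscale, ← hPdef, ← hWdef, ← hm, ← hn]
  have hpow : ε ^ n = ε ^ m * ε ^ (n - m) := by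
    rw [← pow_add]; congr 1; omega
  rw [hpow, mul_assoc, ← mul_add, mul_div_mul_left _ _ (pow_ne_zero m hε.ne')]
end
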